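/- If G is a connected twin-free graph on n vertices with at least one edge, then imax(G) > log_2(n), where imax(G) is the number of maximal independent sets of G. -/

import Mathlib

open SimpleGraph

/-- `s` is an independent set in `G`. -/
def IsIndep {V : Type*} (G : SimpleGraph V) (s : Set V) : Prop :=
  ∀ ⦃u⦄, u ∈ s → ∀ ⦃v⦄, v ∈ s → ¬ G.Adj u v

/-- `s` is a maximal independent set in `G`. -/
def IsMaxIndep {V : Type*} (G : SimpleGraph V) (s : Set V) : Prop :=
  IsIndep G s ∧ ∀ t : Set V, IsIndep G t → s ⊆ t → s = t

/-- The number of maximal independent sets of `G`. -/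
noncomputable def imax {V : Type*} (G : SimpleGraph V) : ℕ :=
  Set.ncard {s : Set V | IsMaxIndep G s}

/-- `G` is twin-free: no two distinct vertices have the same open neighbourhood. -/
def TwinFree {V : Type*} (G : SimpleGraph V) : Prop :=
  ∀ u v : V, G.neighborSet u = G.neighborSet v → u = v

/-- Any independent set extends to a maximal independent set (finite case). -/
lemma exists_maxIndep_superset {V : Type*} [Finite V] (G : SimpleGraph V) {s : Set V}
    (hs : IsIndep G s) : ∃ t, IsMaxIndep G t ∧ s ⊆ t := by
  obtain ⟨t, ⟨ht, hst⟩, hmax⟩ :=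
    Set.Finite.exists_maximalFor (id : Set V → Set V) {t | IsIndep G t ∧ s ⊆ t}
      (Set.toFinite _) ⟨s, hs, subset_rfl⟩
  exact ⟨t, ⟨ht, fun t' ht' htt' => htt'.antisymm (hmax ⟨ht', hst.trans htt'⟩ htt')⟩, hst⟩

lemma indep_singleton {V : Type*} (G : SimpleGraph V) (v : V) : IsIndep G {v} := by
  intro u hu w hw
  simp only [Set.mem_singleton_iff] at hu hw
  subst hu; subst hw
  exact G.loopless.irrefl _

theorem stmt_1 {V : Type*} [Fintype V] (G : SimpleGraph V)
    (hconn : G.Connected) (htf : TwinFree G) (hedge : ∃ u v : V, G.Adj u v) :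
    Real.logb 2 (Fintype.card V) < (imax G : ℝ) := by
  classical
  set M : Set (Set V) := {s : Set V | IsMaxIndep G s} with hM
  set F : V → Set (Set V) := fun v => {S | S ∈ M ∧ v ∈ S} with hF
  -- every vertex is in some maximal independent set
  have hFne : ∀ v : V, (F v).Nonempty := by
    intro v
    obtain ⟨t, ht, hv⟩ := exists_maxIndep_superset G (indep_singleton G v)
    exact ⟨t, ht, hv rfl⟩
  -- F is injective
  have hFinj : Function.Injective F := by
    intro u v huv
    by_contra hne
    have key : ∀ x y : V, F x = F y → ∀ w, G.Adj x w → G.Adj y w := by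
      intro x y hxy w hxw
      by_contra hyw
      have hind : IsIndep G {y, w} := by
        intro c hc d hd hcd
        simp only [Set.mem_insert_iff, Set.mem_singleton_iff] at hc hd
        rcases hc with rfl | rfl <;> rcases hd with rfl | rfl
        · exact G.loopless.irrefl _ hcd
        · exact hyw hcd
        · exact hyw hcd.symm
        · exact G.loopless.irrefl _ hcd
      obtain ⟨S, hS, hsub⟩ := exists_maxIndep_superset G hind
      have hyS : y ∈ S := hsub (by simp)
      have hwS : w ∈ S := hsub (by simp)
      have : S ∈ F y := ⟨hS, hyS⟩
      rw [← hxy] at this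
      exact hS.1 this.2 hwS hxw
    apply hne
    apply htf
    ext w
    simp only [mem_neighborSet]
    exact ⟨key u v huv w, key v u huv.symm w⟩
  -- counting
  have hMfin : M.Finite := Set.toFinite _
  have himg : F '' Set.univ ⊂ {A : Set (Set V) | A ⊆ M} := by
    constructor
    · rintro _ ⟨v, -, rfl⟩
      intro S hS
      exact hS.1
    · intro hsub
      have hemp : (∅ : Set (Set V)) ∈ F '' Set.univ := hsub (by simp)
      obtain ⟨v, -, hv⟩ := hemp
      exact (hFne v).ne_empty hv
  have hcard : Fintype.card V < 2 ^ imax G := by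
    have h1 : Fintype.card V = (F '' Set.univ).ncard := by
      rw [Set.ncard_image_of_injective _ hFinj, Set.ncard_univ, Nat.card_eq_fintype_card]
    have h2 : (F '' Set.univ).ncard < {A : Set (Set V) | A ⊆ M}.ncard :=
      Set.ncard_lt_ncard himg (Set.toFinite _)
    have h3 : {A : Set (Set V) | A ⊆ M}.ncard = 2 ^ imax G := by
      have e : {A : Set (Set V) | A ⊆ M} ≃ Set M := Equiv.Set.powerset M
      have : Nat.card {A : Set (Set V) | A ⊆ M} = Nat.card (Set M) := Nat.card_congr e
      rw [← Nat.card_coe_set_eq, this]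
      have : Nat.card (Set M) = 2 ^ Nat.card M := by
        have : Fintype M := hMfin.fintype
        rw [Nat.card_eq_fintype_card, Nat.card_eq_fintype_card, Fintype.card_set]
      rw [this, imax, Nat.card_coe_set_eq]
    omega
  -- from counting to logb
  obtain ⟨a, b, hab⟩ := hedge
  have hpos : 0 < Fintype.card V := Fintype.card_pos_iff.mpr ⟨a⟩
  have hlt : (Fintype.card V : ℝ) < (2 : ℝ) ^ imax G := by
    exact_mod_cast hcard
  calc Real.logb 2 (Fintype.card V) < Real.logb 2 ((2 : ℝ) ^ imax G) :=
        Real.logb_lt_logb one_lt_two (by exact_mod_cast hpos) hlt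
    _ = imax G := by
        rw [Real.logb_pow]; simp [Real.logb_self_eq_one]
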